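/- Let a, b be real numbers with a > -1, |b| < 1 and |b| < 1 + a, and set K = Β(a+1,b+1). Define G₁(x) = 2K·x^{(1+a+b)/2} - ∫_0^x u^a (1-u)^b du - K·x^{1+a+b} for x ∈ [0,1]. Then there exist constants c, C > 0, depending only on a and b, such that c · x^{(1+a+b)/2} · (1-x)^{1+b} ≤ G₁(x) ≤ C · x^{(1+a+b)/2} · (1-x)^{1+b} for all x ∈ [0,1]. -/

import Mathlib

open Real MeasureTheory

/-- The Euler Beta function. -/
noncomputable def Beta (x y : ℝ) : ℝ := Real.Gamma x * Real.Gamma y / Real.Gamma (x + y)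

/-- The covariance function `R_{a,b}(t,s)` of the weighted fractional Brownian motion. -/
noncomputable def R (a b t s : ℝ) : ℝ :=
  (1 / (2 * Beta (a + 1) (b + 1))) *
    ∫ u in (0:ℝ)..(min t s), u ^ a * ((t - u) ^ b + (s - u) ^ b)

private lemma aux_ppos (b x α β : ℝ) (hx : 0 < x) (hx1 : x < 1) (hβ : 0 < β) (hb : b < 1)
    (hαβ : α = β + b) (hα : 0 < α) :
    0 < β*(1-x)*(1-x^α) - b*x*(1-x^α) + α*x^α*(1-x) := by
  have hxa : (0:ℝ) < x ^ α := rpow_pos_of_pos hx α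
  have hxa1 : x ^ α < 1 := rpow_lt_one hx.le hx1 hα
  have h1x : (0:ℝ) < 1 - x := by linarith
  have h1xa : (0:ℝ) < 1 - x^α := by linarith
  rcases le_or_gt b 0 with hb0 | hb0
  · nlinarith [mul_pos (mul_pos hβ h1x) h1xa,
      mul_nonneg (mul_nonneg (neg_nonneg.2 hb0) hx.le) h1xa.le,
      mul_pos (mul_pos hα hxa) h1x]
  · rcases le_or_gt α 1 with hα1 | hα1
    · have amgm : x ^ (1-α) * 1 ^ α ≤ (1-α)*x + α*1 :=
        Real.geom_mean_le_arith_mean2_weighted (by linarith) hα.le hx.le zero_le_one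
          (by ring)
      have hxx : x ^ (1-α) * x ^ α = x := by
        rw [← Real.rpow_add hx]; norm_num
      have key : x * (1 - x^α) ≤ α * x^α * (1-x) := by
        have h1 : x ^ (1-α) ≤ (1-α)*x + α := by simpa using amgm
        nlinarith [mul_le_mul_of_nonneg_right h1 hxa.le]
      nlinarith [mul_pos (mul_pos hβ h1x) h1xa,
        mul_le_mul_of_nonneg_left key hb0.le,
        mul_pos (mul_pos hα hxa) h1x]
    · have bern : 1 + α*(x-1) ≤ x ^ α := by
        have := one_add_mul_self_le_rpow_one_add (s := x-1) (by linarith) hα1.le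
        simpa using this
      have h1' : b*(x*(1-x^α)) ≤ b*(x*(α*(1-x))) := by
        apply mul_le_mul_of_nonneg_left _ hb0.le
        apply mul_le_mul_of_nonneg_left _ hx.le
        nlinarith
      have amgm : 1 ^ (β/α) * (x^α) ^ (b/α) ≤ (β/α)*1 + (b/α)*(x^α) :=
        Real.geom_mean_le_arith_mean2_weighted (by positivity) (by positivity)
          zero_le_one hxa.le (by field_simp; linarith)
      have hxb : (x^α) ^ (b/α) = x ^ b := by
        rw [← Real.rpow_mul hx.le]
        congr 1; field_simp
      have h2 : α * x^b ≤ β + b*(x^α) := by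
        rw [hxb, one_rpow, one_mul] at amgm
        have := mul_le_mul_of_nonneg_left amgm hα.le
        calc α * x^b ≤ α * (β/α*1 + b/α*(x^α)) := this
          _ = β + b*(x^α) := by field_simp
      have h3 : x ≤ x ^ b := by
        have := rpow_le_rpow_of_exponent_ge hx hx1.le hb.le
        rwa [rpow_one] at this
      have hβ' : β = α - b := by linarith
      subst hβ'
      nlinarith [mul_le_mul_of_nonneg_left h2 h1x.le,
        mul_le_mul_of_nonneg_left h3 (mul_pos hα h1x).le,
        mul_pos (mul_pos (mul_pos hα hx) h1x) (show (0:ℝ) < 1-b by linarith)]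

private lemma aux_dpos (b t α β : ℝ) (ht0 : 0 < t) (ht1 : t < 1) (hβ : 0 < β) (hb : b < 1)
    (hαβ : α = β + b) (hα : 0 < α) :
    0 < β * t⁻¹ + b * ((1-t)⁻¹ * (-1)) - (1 - t^α)⁻¹ * (-(α * t^(α-1))) := by
  have hP := aux_ppos b t α β ht0 ht1 hβ hb hαβ hα
  have hta0 : (0:ℝ) < 1 - t^α := by
    have := rpow_lt_one ht0.le ht1 hα; linarith
  have h1t : (0:ℝ) < 1 - t := by linarith
  have hkey : t^α = t^(α-1) * t := by
    rw [← Real.rpow_add_one ht0.ne' (α-1)]; norm_num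
  rw [hkey] at hP hta0 ⊢
  have hd : β * t⁻¹ + b * ((1-t)⁻¹ * (-1)) - (1 - t^(α-1)*t)⁻¹ * (-(α * t^(α-1)))
      = (β*(1-t)*(1 - t^(α-1)*t) - b*t*(1 - t^(α-1)*t) + α*(t^(α-1)*t)*(1-t))
        / (t*(1-t)*(1 - t^(α-1)*t)) := by
    rw [eq_div_iff (mul_pos (mul_pos ht0 h1t) hta0).ne']
    linear_combination (β*(1-t)*(1 - t^(α-1)*t)) * mul_inv_cancel₀ ht0.ne'
      - (b*t*(1 - t^(α-1)*t)) * mul_inv_cancel₀ h1t.ne'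
      + (α*t^(α-1)*t*(1-t)) * mul_inv_cancel₀ hta0.ne'
  rw [hd]
  exact div_pos hP (mul_pos (mul_pos ht0 h1t) hta0)

private lemma aux_int (a b : ℝ) (ha : -1 < a) (hb : -1 < b) :
    IntervalIntegrable (fun u : ℝ => u ^ a * (1 - u) ^ b) volume 0 1 := by
  have h1 : IntervalIntegrable (fun u : ℝ => u ^ a * (1 - u) ^ b) volume 0 (1/2) := by
    apply (intervalIntegral.intervalIntegrable_rpow' ha).mul_continuousOn
    apply ContinuousOn.rpow_const (by fun_prop)
    intro u hu
    rw [Set.uIcc_of_le (by norm_num)] at hu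
    left; nlinarith [hu.2]
  have h2 : IntervalIntegrable (fun u : ℝ => u ^ a * (1 - u) ^ b) volume (1/2) 1 := by
    have hsub : IntervalIntegrable (fun u : ℝ => (1 - u) ^ b) volume (1/2) 1 := by
      have h := (intervalIntegral.intervalIntegrable_rpow' hb (a := 0) (b := 1/2)).comp_sub_left 1
      norm_num at h
      exact h.symm
    apply hsub.continuousOn_mul
    apply ContinuousOn.rpow_const (by fun_prop)
    intro u hu
    rw [Set.uIcc_of_le (by norm_num)] at hu
    left; nlinarith [hu.1]
  exact h1.trans h2

private lemma aux_int1b (b : ℝ) (hb : -1 < b) :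
    IntervalIntegrable (fun u : ℝ => (1 - u) ^ b) volume 0 1 := by
  have h := (intervalIntegral.intervalIntegrable_rpow' hb (a := 0) (b := 1)).comp_sub_left 1
  norm_num at h
  exact h.symm

private lemma aux_beta (a b : ℝ) (ha : -1 < a) (hb : -1 < b) :
    (∫ u in (0:ℝ)..1, u ^ a * (1 - u) ^ b) = Beta (a+1) (b+1) := by
  have key := Complex.Gamma_mul_Gamma_eq_betaIntegral
    (s := (a:ℂ)+1) (t := (b:ℂ)+1) (by simp; linarith) (by simp; linarith)
  have hint : Complex.betaIntegral ((a:ℂ)+1) ((b:ℂ)+1)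
      = ((∫ u in (0:ℝ)..1, u ^ a * (1 - u) ^ b : ℝ) : ℂ) := by
    rw [Complex.betaIntegral, ← intervalIntegral.integral_ofReal]
    apply intervalIntegral.integral_congr
    intro x hx
    rw [Set.uIcc_of_le (by norm_num)] at hx
    simp only [add_sub_cancel_right]
    push_cast
    rw [Complex.ofReal_cpow hx.1, Complex.ofReal_cpow (by linarith [hx.2])]
    push_cast; ring
  have hG : Complex.Gamma ((a:ℂ)+1+((b:ℂ)+1)) ≠ 0 := by
    rw [show (a:ℂ)+1+((b:ℂ)+1) = ((a+1+(b+1):ℝ):ℂ) by push_cast; ring, Complex.Gamma_ofReal]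
    exact_mod_cast (Real.Gamma_pos_of_pos (by linarith)).ne'
  rw [hint] at key
  have : ((∫ u in (0:ℝ)..1, u ^ a * (1 - u) ^ b : ℝ) : ℂ)
      = Complex.Gamma ((a:ℂ)+1) * Complex.Gamma ((b:ℂ)+1) / Complex.Gamma ((a:ℂ)+1+((b:ℂ)+1)) := by
    field_simp [key]
    rw [key]; ring
  rw [show ((a:ℂ)+1) = ((a+1:ℝ):ℂ) by push_cast; ring,
      show ((b:ℂ)+1) = ((b+1:ℝ):ℂ) by push_cast; ring,
      show ((a+1:ℝ):ℂ)+((b+1:ℝ):ℂ) = ((a+1+(b+1):ℝ):ℂ) by push_cast; ring] at this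
  rw [Complex.Gamma_ofReal, Complex.Gamma_ofReal, Complex.Gamma_ofReal] at this
  rw [show ((Real.Gamma (a+1):ℂ) * (Real.Gamma (b+1):ℂ) / (Real.Gamma (a+1+(b+1)):ℂ))
      = ((Real.Gamma (a+1) * Real.Gamma (b+1) / Real.Gamma (a+1+(b+1)) : ℝ) : ℂ) by push_cast; ring] at this
  have h2 : (∫ u in (0:ℝ)..1, u ^ a * (1 - u) ^ b)
      = Real.Gamma (a+1) * Real.Gamma (b+1) / Real.Gamma (a+1+(b+1)) := by exact_mod_cast this
  rw [h2, Beta]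

set_option maxHeartbeats 2000000 in
theorem stmt_3 (a b : ℝ) (ha : -1 < a) (hb1 : |b| < 1) (hb2 : |b| < 1 + a) :
    ∃ c > (0:ℝ), ∃ C > (0:ℝ), ∀ x ∈ Set.Icc (0:ℝ) 1,
      c * x ^ ((1 + a + b) / 2) * (1 - x) ^ (1 + b) ≤
          2 * Beta (a + 1) (b + 1) * x ^ ((1 + a + b) / 2) -
            (∫ u in (0:ℝ)..x, u ^ a * (1 - u) ^ b) -
            Beta (a + 1) (b + 1) * x ^ (1 + a + b) ∧
        2 * Beta (a + 1) (b + 1) * x ^ ((1 + a + b) / 2) -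
            (∫ u in (0:ℝ)..x, u ^ a * (1 - u) ^ b) -
            Beta (a + 1) (b + 1) * x ^ (1 + a + b) ≤
          C * x ^ ((1 + a + b) / 2) * (1 - x) ^ (1 + b) := by
  obtain ⟨hbm, hbp⟩ := abs_lt.mp hb1
  obtain ⟨hbm2, hbp2⟩ := abs_lt.mp hb2
  set α : ℝ := (1 + a + b) / 2 with hα_def
  set β : ℝ := (1 + a - b) / 2 with hβ_def
  set K : ℝ := Beta (a + 1) (b + 1) with hK_def
  have h2α : 1 + a + b = 2 * α := by rw [hα_def]; ring
  have hα0 : 0 < α := by rw [hα_def]; linarith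
  have hβ0 : 0 < β := by rw [hβ_def]; linarith
  have hαβ : α = β + b := by rw [hα_def, hβ_def]; ring
  have hb1' : (0:ℝ) < b + 1 := by linarith
  have ha1 : (0:ℝ) < a + 1 := by linarith
  have hK0 : 0 < K := by
    rw [hK_def, Beta]
    have g1 := Real.Gamma_pos_of_pos (show (0:ℝ) < a + 1 by linarith)
    have g2 := Real.Gamma_pos_of_pos (show (0:ℝ) < b + 1 by linarith)
    have g3 := Real.Gamma_pos_of_pos (show (0:ℝ) < a + 1 + (b + 1) by linarith)
    exact div_pos (mul_pos g1 g2) g3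
  clear_value α β K
  set f : ℝ → ℝ := fun u => u ^ a * (1 - u) ^ b with hf_def
  set F : ℝ → ℝ := fun t => ∫ u in (0:ℝ)..t, f u with hF_def
  have hint01 : IntervalIntegrable f volume 0 1 := aux_int a b ha hbm
  have hintsub : ∀ p q : ℝ, 0 ≤ p → p ≤ 1 → 0 ≤ q → q ≤ 1 →
      IntervalIntegrable f volume p q := by
    intro p q hp0 hp1 hq0 hq1
    exact hint01.mono_set (Set.uIcc_subset_uIcc
      (by rw [Set.uIcc_of_le zero_le_one]; exact ⟨hp0, hp1⟩)
      (by rw [Set.uIcc_of_le zero_le_one]; exact ⟨hq0, hq1⟩))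
  have hFK : F 1 = K := by
    rw [hF_def, hK_def]
    exact aux_beta a b ha hbm
  have hF0 : F 0 = 0 := intervalIntegral.integral_same
  have hFnonneg : ∀ x : ℝ, 0 ≤ x → x ≤ 1 → 0 ≤ F x := by
    intro x hx hx1
    apply intervalIntegral.integral_nonneg hx
    intro u hu
    exact mul_nonneg (Real.rpow_nonneg hu.1 a)
      (Real.rpow_nonneg (by linarith [hu.2] : (0:ℝ) ≤ 1 - u) b)
  have hFd : ∀ t ∈ Set.Ioo (0:ℝ) 1, HasDerivAt F (t ^ a * (1 - t) ^ b) t := by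
    intro t ht
    apply intervalIntegral.integral_hasDerivAt_right
      (hintsub 0 t le_rfl zero_le_one ht.1.le ht.2.le)
      ⟨Set.univ, Filter.univ_mem, ((by fun_prop : Measurable f)).aestronglyMeasurable⟩
    exact (Real.continuousAt_rpow_const t a (Or.inl ht.1.ne')).mul
      (ContinuousAt.rpow_const (by fun_prop) (Or.inl (sub_ne_zero.mpr ht.2.ne')))
  clear_value f F
  have he1 : ∀ x : ℝ, 0 < x → x ^ (a+1) = x ^ α * x ^ β := by
    intro x hx
    rw [← Real.rpow_add hx]; congr 1; rw [hα_def, hβ_def]; ring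
  have he2 : ∀ x : ℝ, 0 < x → x ^ (1+a+b) = x ^ α * x ^ α := by
    intro x hx
    rw [← Real.rpow_add hx]; congr 1; rw [hα_def]; ring
  have hDd : ∀ t ∈ Set.Ioo (0:ℝ) 1,
      HasDerivAt (fun s : ℝ => 2*K*s^α - F s - K*s^(1+a+b))
        (t^(α-1) * ((2*K*α)*(1 - t^α) - t^β*(1-t)^b)) t := by
    intro t ht
    have h1 : HasDerivAt (fun s : ℝ => s ^ α) (α * t ^ (α-1)) t :=
      Real.hasDerivAt_rpow_const (Or.inl ht.1.ne')
    have h2 : HasDerivAt (fun s : ℝ => s ^ (1+a+b)) ((1+a+b) * t ^ (1+a+b-1)) t :=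
      Real.hasDerivAt_rpow_const (Or.inl ht.1.ne')
    have h3 := hFd t ht
    have h4 := ((h1.const_mul (2*K)).sub h3).sub (h2.const_mul K)
    refine h4.congr_deriv ?_
    symm
    have e1 : t^(α-1) * t^α = t^(1+a+b-1) := by
      rw [← Real.rpow_add ht.1]; congr 1; rw [hα_def]; ring
    have e2 : t^(α-1) * t^β = t^a := by
      rw [← Real.rpow_add ht.1]; congr 1; rw [hα_def, hβ_def]; ring
    calc t^(α-1) * ((2*K*α)*(1 - t^α) - t^β*(1-t)^b)
        = 2*K*(α*t^(α-1)) - 2*K*α*(t^(α-1)*t^α) - (t^(α-1)*t^β)*(1-t)^b := by ring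
      _ = 2*K*(α*t^(α-1)) - t^a*(1-t)^b - K*((1+a+b)*t^(1+a+b-1)) := by
          rw [e1, e2]; rw [h2α]; ring
  set J : ℝ → ℝ := fun t => β * Real.log t + b * Real.log (1-t) - Real.log (1 - t^α)
    with hJ_def
  clear_value J
  have hJd : ∀ t ∈ Set.Ioo (0:ℝ) 1,
      HasDerivAt J (β * t⁻¹ + b * ((1-t)⁻¹ * (-1)) - (1 - t^α)⁻¹ * (-(α * t^(α-1)))) t := by
    intro t ht
    have ht1 : (0:ℝ) < 1 - t := by linarith [ht.2]
    have hta : t ^ α < 1 := Real.rpow_lt_one ht.1.le ht.2 hα0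
    rw [hJ_def]
    have h1 : HasDerivAt (fun s : ℝ => β * Real.log s) (β * t⁻¹) t :=
      (Real.hasDerivAt_log ht.1.ne').const_mul β
    have h2 : HasDerivAt (fun s : ℝ => (1:ℝ) - s) (-1) t := (hasDerivAt_id t).const_sub 1
    have h2' : HasDerivAt (fun s : ℝ => Real.log (1 - s)) ((1 - t)⁻¹ * (-1)) t :=
      (Real.hasDerivAt_log ht1.ne').comp t h2
    have h3 : HasDerivAt (fun s : ℝ => s ^ α) (α * t ^ (α - 1)) t :=
      Real.hasDerivAt_rpow_const (Or.inl ht.1.ne')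
    have h3' : HasDerivAt (fun s : ℝ => (1:ℝ) - s ^ α) (-(α * t ^ (α - 1))) t := h3.const_sub 1
    have h3'' : HasDerivAt (fun s : ℝ => Real.log (1 - s ^ α))
        ((1 - t ^ α)⁻¹ * (-(α * t ^ (α - 1)))) t :=
      by have := (Real.hasDerivAt_log (by linarith : (1:ℝ) - t ^ α ≠ 0)).comp t h3'; exact this
    exact (h1.add (h2'.const_mul b)).sub h3''
  have hJpos : ∀ t ∈ Set.Ioo (0:ℝ) 1,
      0 < β * t⁻¹ + b * ((1-t)⁻¹ * (-1)) - (1 - t^α)⁻¹ * (-(α * t^(α-1))) := by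
    intro t ht
    exact aux_dpos b t α β ht.1 ht.2 hβ0 hbp hαβ hα0
  have hJmono : StrictMonoOn J (Set.Ioo (0:ℝ) 1) := by
    apply strictMonoOn_of_deriv_pos (convex_Ioo 0 1)
    · intro t ht; exact (hJd t ht).continuousAt.continuousWithinAt
    · intro t ht
      rw [interior_Ioo] at ht
      rw [(hJd t ht).deriv]
      exact hJpos t ht
  have hsign : ∀ t ∈ Set.Ioo (0:ℝ) 1,
      (J t < Real.log (2*K*α) → 0 < t^(α-1) * ((2*K*α)*(1 - t^α) - t^β*(1-t)^b)) ∧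
      (Real.log (2*K*α) < J t → t^(α-1) * ((2*K*α)*(1 - t^α) - t^β*(1-t)^b) < 0) := by
    intro t ht
    have ht1 : (0:ℝ) < 1 - t := by linarith [ht.2]
    have hta0 : (0:ℝ) < 1 - t^α := by
      have := Real.rpow_lt_one ht.1.le ht.2 hα0; linarith
    have hKα : (0:ℝ) < 2*K*α := mul_pos (mul_pos two_pos hK0) hα0
    have hlhs : (0:ℝ) < t^β * (1-t)^b :=
      mul_pos (Real.rpow_pos_of_pos ht.1 β) (Real.rpow_pos_of_pos ht1 b)
    have hJt : J t = Real.log (t^β * (1-t)^b) - Real.log (1 - t^α) := by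
      simp only [hJ_def]
      rw [Real.log_mul (Real.rpow_pos_of_pos ht.1 β).ne' (Real.rpow_pos_of_pos ht1 b).ne',
        Real.log_rpow ht.1, Real.log_rpow ht1]
    constructor
    · intro hlt
      rw [hJt] at hlt
      have hlog : Real.log (t^β*(1-t)^b) < Real.log ((2*K*α)*(1 - t^α)) := by
        rw [Real.log_mul hKα.ne' hta0.ne']; linarith
      have h2 : t^β*(1-t)^b < (2*K*α)*(1 - t^α) := by
        have := Real.exp_lt_exp.mpr hlog
        rwa [Real.exp_log hlhs, Real.exp_log (mul_pos hKα hta0)] at this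
      exact mul_pos (Real.rpow_pos_of_pos ht.1 _) (by linarith)
    · intro hlt
      rw [hJt] at hlt
      have hlog : Real.log ((2*K*α)*(1 - t^α)) < Real.log (t^β*(1-t)^b) := by
        rw [Real.log_mul hKα.ne' hta0.ne']; linarith
      have h2 : (2*K*α)*(1 - t^α) < t^β*(1-t)^b := by
        have := Real.exp_lt_exp.mpr hlog
        rwa [Real.exp_log hlhs, Real.exp_log (mul_pos hKα hta0)] at this
      exact mul_neg_of_pos_of_neg (Real.rpow_pos_of_pos ht.1 _) (by linarith)
  -- pointwise bounds on the integrand near the endpoints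
  have hE1 : ∀ x : ℝ, 0 < x → x ≤ 1/2 → F x ≤ 2/(a+1) * x^(a+1) := by
    intro x hx0 hx2
    have hle : F x ≤ ∫ u in (0:ℝ)..x, 2 * u^a := by
      simp only [hF_def]
      apply intervalIntegral.integral_mono_on hx0.le
        (hintsub 0 x le_rfl zero_le_one hx0.le (by linarith))
        ((intervalIntegral.intervalIntegrable_rpow' ha (a := 0) (b := x)).const_mul 2)
      intro u hu
      simp only [hf_def]
      have hu0 : (0:ℝ) ≤ u := hu.1
      have hu2 : u ≤ 1/2 := le_trans hu.2 hx2
      have hub : (1-u)^b ≤ 2 := by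
        rcases le_or_gt 0 b with h | h
        · calc (1-u)^b ≤ 1^b := Real.rpow_le_rpow (by linarith) (by linarith) h
            _ = 1 := Real.one_rpow b
            _ ≤ 2 := one_le_two
        · calc (1-u)^b ≤ (2⁻¹ : ℝ)^b :=
              Real.rpow_le_rpow_of_nonpos (by norm_num) (by linarith) h.le
            _ = 2^(-b) := by
              rw [Real.inv_rpow (by norm_num : (0:ℝ) ≤ 2), ← Real.rpow_neg (by norm_num : (0:ℝ) ≤ 2)]
            _ ≤ 2^(1:ℝ) := Real.rpow_le_rpow_of_exponent_le one_le_two (by linarith)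
            _ = 2 := Real.rpow_one 2
      calc u^a * (1-u)^b ≤ u^a * 2 :=
            mul_le_mul_of_nonneg_left hub (Real.rpow_nonneg hu0 a)
        _ = 2 * u^a := by ring
    have hci : (∫ u in (0:ℝ)..x, 2 * u^a) = 2/(a+1) * x^(a+1) := by
      rw [intervalIntegral.integral_const_mul, integral_rpow (Or.inl ha),
        Real.zero_rpow (by linarith : a + 1 ≠ 0), sub_zero]
      field_simp
    rw [hci] at hle
    exact hle
  set m : ℝ := min 1 ((2:ℝ)^(-a)) with hm_def
  set M : ℝ := max 1 ((2:ℝ)^(-a)) with hM_def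
  have hm0 : 0 < m := lt_min one_pos (Real.rpow_pos_of_pos two_pos _)
  have hM0 : 0 < M := lt_of_lt_of_le one_pos (le_max_left _ _)
  have h2a : (2:ℝ)^(-a) = (2⁻¹ : ℝ)^a := by
    rw [Real.inv_rpow (by norm_num), ← Real.rpow_neg (by norm_num)]
  have hua : ∀ u : ℝ, 1/2 ≤ u → u ≤ 1 → m ≤ u^a ∧ u^a ≤ M := by
    intro u h1 h2
    have hu0 : (0:ℝ) < u := by linarith
    constructor
    · rcases le_or_gt 0 a with h | h
      · refine le_trans (min_le_right _ _) ?_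
        rw [h2a]
        exact Real.rpow_le_rpow (by norm_num) (by linarith) h
      · refine le_trans (min_le_left _ _) ?_
        have := Real.rpow_le_rpow_of_nonpos hu0 h2 h.le
        rwa [Real.one_rpow] at this
    · rcases le_or_gt 0 a with h | h
      · refine le_trans ?_ (le_max_left _ _)
        exact Real.rpow_le_one hu0.le h2 h
      · refine le_trans ?_ (le_max_right _ _)
        rw [h2a]
        exact Real.rpow_le_rpow_of_nonpos (by norm_num) (by linarith : (2⁻¹:ℝ) ≤ u) h.le
  clear_value m M
  have hIbase : ∀ x : ℝ, (∫ u in x..1, (1-u)^b) = (1-x)^(b+1)/(b+1) := by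
    intro x
    have h := intervalIntegral.integral_comp_sub_left (a := x) (b := 1)
      (fun u : ℝ => u^b) 1
    norm_num at h
    rw [h, integral_rpow (Or.inl hbm), Real.zero_rpow (by linarith : b + 1 ≠ 0)]
    ring
  have hintc : ∀ x : ℝ, 0 ≤ x → x ≤ 1 →
      IntervalIntegrable (fun u : ℝ => (1-u)^b) volume x 1 := by
    intro x hx0 hx1
    exact (aux_int1b b hbm).mono_set (Set.uIcc_subset_uIcc
      (by rw [Set.uIcc_of_le zero_le_one]; exact ⟨hx0, hx1⟩)
      (by rw [Set.uIcc_of_le zero_le_one]; exact ⟨zero_le_one, le_rfl⟩))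
  have hsplit : ∀ x : ℝ, 0 ≤ x → x ≤ 1 → K - F x = ∫ u in x..1, f u := by
    intro x hx0 hx1
    have h := intervalIntegral.integral_add_adjacent_intervals
      (hintsub 0 x le_rfl zero_le_one hx0 hx1) (hintsub x 1 hx0 hx1 zero_le_one le_rfl)
    have h2 : F x + (∫ u in x..1, f u) = K := by rw [← hFK]; simp only [hF_def]; exact h
    linarith
  have hE2l : ∀ x : ℝ, 1/2 ≤ x → x ≤ 1 → m * ((1-x)^(b+1)/(b+1)) ≤ K - F x := by
    intro x hxh hx1
    rw [hsplit x (by linarith) hx1, ← hIbase x, ← intervalIntegral.integral_const_mul]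
    apply intervalIntegral.integral_mono_on hx1
      ((hintc x (by linarith) hx1).const_mul m)
      (hintsub x 1 (by linarith) hx1 zero_le_one le_rfl)
    intro u hu
    simp only [hf_def]
    exact mul_le_mul_of_nonneg_right (hua u (le_trans hxh hu.1) hu.2).1
      (Real.rpow_nonneg (by linarith [hu.2] : (0:ℝ) ≤ 1 - u) b)
  have hE2u : ∀ x : ℝ, 1/2 ≤ x → x ≤ 1 → K - F x ≤ M * ((1-x)^(b+1)/(b+1)) := by
    intro x hxh hx1
    rw [hsplit x (by linarith) hx1, ← hIbase x, ← intervalIntegral.integral_const_mul]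
    apply intervalIntegral.integral_mono_on hx1
      (hintsub x 1 (by linarith) hx1 zero_le_one le_rfl)
      ((hintc x (by linarith) hx1).const_mul M)
    intro u hu
    simp only [hf_def]
    exact mul_le_mul_of_nonneg_right (hua u (le_trans hxh hu.1) hu.2).2
      (Real.rpow_nonneg (by linarith [hu.2] : (0:ℝ) ≤ 1 - u) b)
  -- choice of x₀
  obtain ⟨x₀, hx₀0, hx₀h, hx₀c⟩ : ∃ x₀ : ℝ, 0 < x₀ ∧ x₀ ≤ 1/2 ∧
      2/(a+1)*x₀^β + K*x₀^α ≤ K := by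
    have hcont : ContinuousAt (fun t : ℝ => 2/(a+1)*t^β + K*t^α) 0 :=
      ((Real.continuousAt_rpow_const 0 β (Or.inr hβ0.le)).const_mul _).add
        ((Real.continuousAt_rpow_const 0 α (Or.inr hα0.le)).const_mul _)
    have htend : Filter.Tendsto (fun t : ℝ => 2/(a+1)*t^β + K*t^α)
        (nhdsWithin 0 (Set.Ioi 0)) (nhds 0) := by
      have h := (hcont.continuousWithinAt (s := Set.Ioi 0)).tendsto
      simpa [Real.zero_rpow hβ0.ne', Real.zero_rpow hα0.ne'] using h
    have hev1 := htend.eventually_lt_const hK0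
    have hev2 : ∀ᶠ t in nhdsWithin (0:ℝ) (Set.Ioi 0), t ∈ Set.Ioc (0:ℝ) (1/2) :=
      Filter.eventually_of_mem (Ioc_mem_nhdsGT (by norm_num)) (fun t ht => ht)
    obtain ⟨t, ht1, ht2⟩ := (hev1.and hev2).exists
    exact ⟨t, ht2.1, ht2.2, ht1.le⟩
  -- choice of x₁ = 1 - s₁
  obtain ⟨s₁, hs₁0, hs₁h, hs₁c⟩ : ∃ s₁ : ℝ, 0 < s₁ ∧ s₁ ≤ 1/2 ∧
      K*(2*α)^2*s₁^(1-b) ≤ m/(2*(b+1)) := by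
    have hcont : ContinuousAt (fun t : ℝ => K*(2*α)^2*t^(1-b)) 0 :=
      (Real.continuousAt_rpow_const 0 (1-b) (Or.inr (by linarith))).const_mul _
    have htend : Filter.Tendsto (fun t : ℝ => K*(2*α)^2*t^(1-b))
        (nhdsWithin 0 (Set.Ioi 0)) (nhds 0) := by
      have h := (hcont.continuousWithinAt (s := Set.Ioi 0)).tendsto
      simpa [Real.zero_rpow (by linarith : 1 - b ≠ 0)] using h
    have hev1 := htend.eventually_lt_const
      (show (0:ℝ) < m/(2*(b+1)) from div_pos hm0 (by linarith))
    have hev2 : ∀ᶠ t in nhdsWithin (0:ℝ) (Set.Ioi 0), t ∈ Set.Ioc (0:ℝ) (1/2) :=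
      Filter.eventually_of_mem (Ioc_mem_nhdsGT (by norm_num)) (fun t ht => ht)
    obtain ⟨t, ht1, ht2⟩ := (hev1.and hev2).exists
    exact ⟨t, ht2.1, ht2.2, ht1.le⟩
  set x₁ : ℝ := 1 - s₁ with hx₁_def
  have hx₁l : 1/2 ≤ x₁ := by rw [hx₁_def]; linarith
  have hx₁1 : x₁ < 1 := by rw [hx₁_def]; linarith
  have hexp : ∀ x : ℝ, 1/2 ≤ x → x < 1 → 1 - x^α ≤ 2*α*(1-x) := by
    intro x hx hx1
    have hx0 : (0:ℝ) < x := by linarith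
    have h1 : x^α = Real.exp (Real.log x * α) := Real.rpow_def_of_pos hx0 α
    have h2 : 1 + Real.log x * α ≤ x^α := by
      rw [h1]; linarith [Real.add_one_le_exp (Real.log x * α)]
    have h3 : -Real.log x ≤ 2*(1-x) := by
      have h4 := Real.log_le_sub_one_of_pos (show (0:ℝ) < x⁻¹ by positivity)
      rw [Real.log_inv] at h4
      have h6 : x * x⁻¹ = 1 := mul_inv_cancel₀ hx0.ne'
      have h7 : x⁻¹ ≤ 2 := by
        rw [inv_le_comm₀ hx0 two_pos]; linarith
      linarith [mul_le_mul_of_nonneg_left h7 (show (0:ℝ) ≤ 1-x by linarith), h6, h4]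
    linarith [h2, mul_le_mul_of_nonneg_left h3 hα0.le]
  -- region A
  have regA : ∀ x : ℝ, 0 < x → x ≤ x₀ → K * x^α ≤ 2*K*x^α - F x - K*x^(1+a+b) := by
    intro x hx hxx
    have hx2 : x ≤ 1/2 := le_trans hxx hx₀h
    have hxαp : (0:ℝ) < x^α := Real.rpow_pos_of_pos hx α
    have hxβ : x^β ≤ x₀^β := Real.rpow_le_rpow hx.le hxx hβ0.le
    have hxα : x^α ≤ x₀^α := Real.rpow_le_rpow hx.le hxx hα0.le
    have p1 : F x ≤ 2/(a+1) * (x^α * x₀^β) := by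
      refine le_trans (hE1 x hx hx2) ?_
      rw [he1 x hx]
      exact mul_le_mul_of_nonneg_left (mul_le_mul_of_nonneg_left hxβ hxαp.le)
        (div_pos two_pos ha1).le
    have p2 : K*x^(1+a+b) ≤ K*x₀^α*x^α := by
      rw [he2 x hx]
      calc K*(x^α*x^α) ≤ K*(x₀^α*x^α) :=
            mul_le_mul_of_nonneg_left (mul_le_mul_of_nonneg_right hxα hxαp.le) hK0.le
        _ = K*x₀^α*x^α := by ring
    have p3 : (2/(a+1)*x₀^β + K*x₀^α) * x^α ≤ K * x^α :=
      mul_le_mul_of_nonneg_right hx₀c hxαp.le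
    linarith [p1, p2, p3]
  -- region C
  have regC : ∀ x : ℝ, x₁ ≤ x → x < 1 →
      m/(2*(b+1)) * (1-x)^(b+1) ≤ 2*K*x^α - F x - K*x^(1+a+b) := by
    intro x hxl hxr
    have hxh : 1/2 ≤ x := le_trans hx₁l hxl
    have hx0 : (0:ℝ) < x := by linarith
    have h1x : (0:ℝ) < 1-x := by linarith
    have hlow := hE2l x hxh hxr.le
    have hbig : K*(1-x^α)^2 ≤ m/(2*(b+1)) * (1-x)^(b+1) := by
      have h1 : 1 - x^α ≤ 2*α*(1-x) := hexp x hxh hxr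
      have h0 : 0 ≤ 1 - x^α := by
        have := Real.rpow_le_one hx0.le hxr.le hα0.le; linarith
      have hsq : (1-x^α)^2 ≤ (2*α)^2*(1-x)^2 := by
        calc (1-x^α)^2 ≤ (2*α*(1-x))^2 := pow_le_pow_left₀ h0 h1 2
          _ = (2*α)^2*(1-x)^2 := by ring
      have hsplit2 : ((1-x):ℝ)^(2:ℕ) = (1-x)^(1-b) * (1-x)^(b+1) := by
        rw [← Real.rpow_add h1x, show (1:ℝ)-b+(b+1) = ((2:ℕ):ℝ) by push_cast; ring,
          Real.rpow_natCast]
      have hmono : (1-x)^(1-b) ≤ s₁^(1-b) := by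
        apply Real.rpow_le_rpow h1x.le _ (by linarith)
        rw [hx₁_def] at hxl; linarith
      have c1 : K*(1-x^α)^2 ≤ K*((2*α)^2*(1-x)^2) :=
        mul_le_mul_of_nonneg_left hsq hK0.le
      have c2 : K*((2*α)^2*(1-x)^2) = (K*(2*α)^2*(1-x)^(1-b))*(1-x)^(b+1) := by
        rw [show ((1-x):ℝ)^2 = ((1-x):ℝ)^(2:ℕ) from rfl, hsplit2]; ring
      have c3 : (K*(2*α)^2*(1-x)^(1-b))*(1-x)^(b+1)
          ≤ (K*(2*α)^2*s₁^(1-b))*(1-x)^(b+1) := by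
        apply mul_le_mul_of_nonneg_right _ (Real.rpow_nonneg h1x.le _)
        exact mul_le_mul_of_nonneg_left hmono (mul_nonneg hK0.le (sq_nonneg _))
      have c4 : (K*(2*α)^2*s₁^(1-b))*(1-x)^(b+1) ≤ m/(2*(b+1))*(1-x)^(b+1) :=
        mul_le_mul_of_nonneg_right hs₁c (Real.rpow_nonneg h1x.le _)
      linarith
    have hid : m*((1-x)^(b+1)/(b+1)) - m/(2*(b+1))*(1-x)^(b+1)
        = m/(2*(b+1))*(1-x)^(b+1) := by
      field_simp
      ring
    rw [he2 x hx0]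
    linarith [hbig, hlow, hid]
  -- region B (quasi-concavity)
  have regB : ∀ x : ℝ, x₀ ≤ x → x ≤ x₁ →
      min (2*K*x₀^α - F x₀ - K*x₀^(1+a+b)) (2*K*x₁^α - F x₁ - K*x₁^(1+a+b))
        ≤ 2*K*x^α - F x - K*x^(1+a+b) := by
    intro x hxl hxr
    have hx0 : 0 < x := lt_of_lt_of_le hx₀0 hxl
    have hx1 : x < 1 := lt_of_le_of_lt hxr hx₁1
    have hxIoo : x ∈ Set.Ioo (0:ℝ) 1 := ⟨hx0, hx1⟩
    rcases le_or_gt (J x) (Real.log (2*K*α)) with hc | hc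
    · refine le_trans (min_le_left _ _) ?_
      rcases eq_or_lt_of_le hxl with heq | hlt
      · rw [heq]
      · have hmonoD : StrictMonoOn (fun s : ℝ => 2*K*s^α - F s - K*s^(1+a+b))
            (Set.Icc x₀ x) := by
          apply strictMonoOn_of_deriv_pos (convex_Icc x₀ x)
          · intro y hy
            exact (hDd y ⟨lt_of_lt_of_le hx₀0 hy.1,
              lt_of_le_of_lt hy.2 hx1⟩).continuousAt.continuousWithinAt
          · intro y hy
            rw [interior_Icc] at hy
            have hyI : y ∈ Set.Ioo (0:ℝ) 1 := ⟨lt_trans hx₀0 hy.1, lt_trans hy.2 hx1⟩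
            rw [(hDd y hyI).deriv]
            exact (hsign y hyI).1 (lt_of_lt_of_le (hJmono hyI hxIoo hy.2) hc)
        exact (hmonoD ⟨le_rfl, hlt.le⟩ ⟨hlt.le, le_rfl⟩ hlt).le
    · refine le_trans (min_le_right _ _) ?_
      rcases eq_or_lt_of_le hxr with heq | hlt
      · rw [← heq]
      · have hantiD : StrictAntiOn (fun s : ℝ => 2*K*s^α - F s - K*s^(1+a+b))
            (Set.Icc x x₁) := by
          apply strictAntiOn_of_deriv_neg (convex_Icc x x₁)
          · intro y hy
            exact (hDd y ⟨lt_of_lt_of_le hx0 hy.1,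
              lt_of_le_of_lt hy.2 hx₁1⟩).continuousAt.continuousWithinAt
          · intro y hy
            rw [interior_Icc] at hy
            have hyI : y ∈ Set.Ioo (0:ℝ) 1 := ⟨lt_trans hx0 hy.1, lt_trans hy.2 hx₁1⟩
            rw [(hDd y hyI).deriv]
            exact (hsign y hyI).2 (lt_trans hc (hJmono hxIoo hyI hy.1))
        exact (hantiD ⟨le_rfl, hlt.le⟩ ⟨hlt.le, le_rfl⟩ hlt).le
  have hDx₀pos : 0 < 2*K*x₀^α - F x₀ - K*x₀^(1+a+b) :=
    lt_of_lt_of_le (mul_pos hK0 (Real.rpow_pos_of_pos hx₀0 α)) (regA x₀ hx₀0 le_rfl)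
  have hDx₁pos : 0 < 2*K*x₁^α - F x₁ - K*x₁^(1+a+b) := by
    refine lt_of_lt_of_le ?_ (regC x₁ le_rfl hx₁1)
    exact mul_pos (div_pos hm0 (by linarith)) (Real.rpow_pos_of_pos (by linarith) _)
  set c : ℝ := min (min K (m/(2*(b+1))))
    (min (2*K*x₀^α - F x₀ - K*x₀^(1+a+b)) (2*K*x₁^α - F x₁ - K*x₁^(1+a+b))) with hc_def
  set C : ℝ := max (8*K) (M*2^α/(b+1)) with hC_def
  have hcK : c ≤ K := le_trans (min_le_left _ _) (min_le_left _ _)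
  have hcm : c ≤ m/(2*(b+1)) := le_trans (min_le_left _ _) (min_le_right _ _)
  have hcd : c ≤ min (2*K*x₀^α - F x₀ - K*x₀^(1+a+b)) (2*K*x₁^α - F x₁ - K*x₁^(1+a+b)) :=
    min_le_right _ _
  have hC8 : 8*K ≤ C := le_max_left _ _
  have hCM : M*2^α/(b+1) ≤ C := le_max_right _ _
  have hc0 : 0 < c :=
    lt_min (lt_min hK0 (div_pos hm0 (by linarith))) (lt_min hDx₀pos hDx₁pos)
  have hC0 : 0 < C := lt_of_lt_of_le (by linarith) hC8
  clear_value c C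
  refine ⟨c, hc0, C, hC0, ?_⟩
  intro x hx
  have hb1b : (1:ℝ) + b = b + 1 := by ring
  have hFxeq : (∫ u in (0:ℝ)..x, f u) = F x := by simp only [hF_def]
  rw [hb1b, hFxeq]
  obtain rfl | hx0' := hx.1.eq_or_lt
  · have hz1 : (0:ℝ)^α = 0 := Real.zero_rpow hα0.ne'
    have hz2 : (0:ℝ)^(1+a+b) = 0 := by
      apply Real.zero_rpow; rw [h2α]; exact (mul_pos two_pos hα0).ne'
    rw [hz1, hz2]
    norm_num [hF0]
  obtain hx1' | rfl := hx.2.lt_or_eq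
  · -- interior
    have hxIoo : x ∈ Set.Ioo (0:ℝ) 1 := ⟨hx0', hx1'⟩
    have hxα0 : 0 < x^α := Real.rpow_pos_of_pos hx0' α
    have h1x0 : (0:ℝ) < 1 - x := by linarith
    have hw0 : (0:ℝ) ≤ (1-x)^(b+1) := Real.rpow_nonneg h1x0.le _
    have hw1 : (1-x)^(b+1) ≤ 1 := Real.rpow_le_one h1x0.le (by linarith) (by linarith)
    have hwx : x^α ≤ 1 := Real.rpow_le_one hx0'.le hx1'.le hα0.le
    constructor
    · -- lower bound
      rcases le_or_gt x x₀ with hA | hA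
      · have h := regA x hx0' hA
        linarith [mul_le_mul_of_nonneg_right (mul_le_mul_of_nonneg_right hcK hxα0.le) hw0,
          mul_le_mul_of_nonneg_left hw1 (mul_pos hK0 hxα0).le]
      · rcases le_or_gt x x₁ with hB | hC'
        · have h := regB x hA.le hB
          linarith [mul_le_mul_of_nonneg_left hw1 (mul_nonneg hc0.le hxα0.le),
            mul_le_mul_of_nonneg_left hwx hc0.le]
        · have h := regC x hC'.le hx1'
          linarith [mul_le_mul_of_nonneg_right (mul_le_mul_of_nonneg_left hwx hc0.le) hw0,
            mul_le_mul_of_nonneg_right hcm hw0]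
    · -- upper bound
      rcases le_or_gt x (1/2) with hhalf | hhalf
      · have hF' : 0 ≤ F x := hFnonneg x hx0'.le hx1'.le
        have hX : 0 ≤ K*x^(1+a+b) :=
          mul_nonneg hK0.le (Real.rpow_nonneg hx0'.le _)
        have hq : (1/4:ℝ) ≤ (1-x)^(b+1) := by
          have e4 : ((1:ℝ)/2)^(2:ℝ) = 1/4 := by
            rw [show (2:ℝ) = ((2:ℕ):ℝ) by norm_num, Real.rpow_natCast]
            norm_num
          calc (1/4:ℝ) = ((1:ℝ)/2)^(2:ℝ) := e4.symm
            _ ≤ ((1:ℝ)/2)^(b+1) :=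
              Real.rpow_le_rpow_of_exponent_ge (by norm_num) (by norm_num) (by linarith)
            _ ≤ (1-x)^(b+1) :=
              Real.rpow_le_rpow (by norm_num) (by linarith) (by linarith)
        linarith [hF', hX, mul_le_mul_of_nonneg_left hq (mul_pos hK0 hxα0).le,
          mul_le_mul_of_nonneg_right (mul_le_mul_of_nonneg_right hC8 hxα0.le) hw0]
      · have h1 : 2*K*x^α - F x - K*x^(1+a+b) ≤ K - F x := by
          rw [he2 x hx0']
          linarith [mul_nonneg hK0.le (sq_nonneg (1 - x^α))]
        have h2 := hE2u x hhalf.le hx1'.le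
        have h3 : (1:ℝ) ≤ 2^α * x^α := by
          rw [← Real.mul_rpow (by norm_num) hx0'.le]
          calc (1:ℝ) = 1^α := (Real.one_rpow α).symm
            _ ≤ (2*x)^α := Real.rpow_le_rpow (by norm_num) (by linarith) hα0.le
        have h4 : M*((1-x)^(b+1)/(b+1)) ≤ (M*2^α/(b+1)) * x^α * (1-x)^(b+1) := by
          have hnn : (0:ℝ) ≤ M*((1-x)^(b+1)/(b+1)) :=
            mul_nonneg hM0.le (div_nonneg hw0 (by linarith))
          have := mul_le_mul_of_nonneg_left h3 hnn
          calc M*((1-x)^(b+1)/(b+1)) = M*((1-x)^(b+1)/(b+1)) * 1 := by ring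
            _ ≤ M*((1-x)^(b+1)/(b+1)) * (2^α * x^α) := this
            _ = (M*2^α/(b+1)) * x^α * (1-x)^(b+1) := by ring
        have h5 : (M*2^α/(b+1)) * x^α * (1-x)^(b+1) ≤ C * x^α * (1-x)^(b+1) := by
          apply mul_le_mul_of_nonneg_right _ hw0
          exact mul_le_mul_of_nonneg_right hCM hxα0.le
        linarith
  · -- x = 1
    have hz : ((1:ℝ)-1:ℝ) = 0 := by norm_num
    rw [hz, Real.zero_rpow (by linarith : b+1 ≠ 0), Real.one_rpow, Real.one_rpow, hFK]
    norm_num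
    constructor <;> linarith
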